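/- The function α ↦ (1/√α) ∫_0^{π/2} √(1 + 4α sin²x) dx tends to 2 as α → ∞. Consequently, the ground-state energy per oscillator of the strongly coupled nearest-neighbor harmonic chain, E/(n E_0) = (2/π) ∫_0^{π/2} √(1 + 4α sin²x) dx (in the large-n continuum limit), is asymptotic to (4/π)√α as the coupling α → ∞. -/

import Mathlib

open Real Filter

lemma sqrt_add_le' {a b : ℝ} (ha : 0 ≤ a) (hb : 0 ≤ b) :
    Real.sqrt (a + b) ≤ Real.sqrt a + Real.sqrt b := by
  have h1 := Real.sq_sqrt ha
  have h2 := Real.sq_sqrt hb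
  have h3 := Real.sqrt_nonneg a
  have h4 := Real.sqrt_nonneg b
  have : a + b ≤ (Real.sqrt a + Real.sqrt b) ^ 2 := by nlinarith
  calc Real.sqrt (a + b) ≤ Real.sqrt ((Real.sqrt a + Real.sqrt b) ^ 2) :=
        Real.sqrt_le_sqrt this
    _ = Real.sqrt a + Real.sqrt b := Real.sqrt_sq (by positivity)

lemma key_bounds (α : ℝ) (hα : 0 < α) :
    2 ≤ (Real.sqrt α)⁻¹ * ∫ x in (0:ℝ)..(π/2), Real.sqrt (1 + 4 * α * (Real.sin x)^2)
    ∧ (Real.sqrt α)⁻¹ * (∫ x in (0:ℝ)..(π/2), Real.sqrt (1 + 4 * α * (Real.sin x)^2))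
        ≤ 2 + (π/2) * (Real.sqrt α)⁻¹ := by
  have hπ : (0:ℝ) < π / 2 := by positivity
  have hs : Real.sqrt α ≠ 0 := ne_of_gt (Real.sqrt_pos.mpr hα)
  have heq : (Real.sqrt α)⁻¹ * (∫ x in (0:ℝ)..(π/2), Real.sqrt (1 + 4 * α * (Real.sin x)^2))
      = ∫ x in (0:ℝ)..(π/2), Real.sqrt (α⁻¹ + 4 * (Real.sin x)^2) := by
    rw [← intervalIntegral.integral_const_mul]
    congr 1; funext x
    rw [← Real.sqrt_inv, ← Real.sqrt_mul (by positivity)]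
    congr 1
    field_simp
  rw [heq]
  have hcont : Continuous fun x : ℝ => Real.sqrt (α⁻¹ + 4 * (Real.sin x)^2) := by
    fun_prop
  have hint : IntervalIntegrable (fun x : ℝ => Real.sqrt (α⁻¹ + 4 * (Real.sin x)^2))
      MeasureTheory.volume 0 (π/2) := hcont.intervalIntegrable _ _
  constructor
  · have hle : ∀ x ∈ Set.Icc (0:ℝ) (π/2),
        2 * Real.sin x ≤ Real.sqrt (α⁻¹ + 4 * (Real.sin x)^2) := by
      intro x hx
      have hsin : 0 ≤ Real.sin x := Real.sin_nonneg_of_nonneg_of_le_pi hx.1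
        (hx.2.trans (by linarith [Real.pi_pos]))
      have : 2 * Real.sin x = Real.sqrt (4 * (Real.sin x)^2) := by
        rw [show (4:ℝ) * Real.sin x ^ 2 = (2 * Real.sin x)^2 by ring,
          Real.sqrt_sq (by positivity)]
      rw [this]
      exact Real.sqrt_le_sqrt (le_add_of_nonneg_left (by positivity))
    have := intervalIntegral.integral_mono_on (le_of_lt hπ)
      ((continuous_const.mul Real.continuous_sin).intervalIntegrable _ _) hint hle
    have h2 : (∫ x in (0:ℝ)..(π/2), 2 * Real.sin x) = 2 := by
      rw [intervalIntegral.integral_const_mul, integral_sin]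
      simp [Real.cos_pi_div_two]
    simp only [Pi.mul_apply, Pi.add_apply] at this
    linarith
  · have hle : ∀ x ∈ Set.Icc (0:ℝ) (π/2),
        Real.sqrt (α⁻¹ + 4 * (Real.sin x)^2) ≤ (Real.sqrt α)⁻¹ + 2 * Real.sin x := by
      intro x hx
      have hsin : 0 ≤ Real.sin x := Real.sin_nonneg_of_nonneg_of_le_pi hx.1
        (hx.2.trans (by linarith [Real.pi_pos]))
      have h1 : Real.sqrt (α⁻¹ + 4 * (Real.sin x)^2)
          ≤ Real.sqrt α⁻¹ + Real.sqrt (4 * (Real.sin x)^2) :=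
        sqrt_add_le' (by positivity) (by positivity)
      have h2 : Real.sqrt (4 * (Real.sin x)^2) = 2 * Real.sin x := by
        rw [show (4:ℝ) * Real.sin x ^ 2 = (2 * Real.sin x)^2 by ring,
          Real.sqrt_sq (by positivity)]
      rw [Real.sqrt_inv] at h1
      linarith
    have := intervalIntegral.integral_mono_on (le_of_lt hπ) hint
      ((continuous_const.add (continuous_const.mul Real.continuous_sin)).intervalIntegrable _ _)
      hle
    have h2 : (∫ x in (0:ℝ)..(π/2), ((Real.sqrt α)⁻¹ + 2 * Real.sin x))
        = (π/2) * (Real.sqrt α)⁻¹ + 2 := by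
      rw [intervalIntegral.integral_add (f := fun x => (Real.sqrt α)⁻¹) (g := fun x => 2 * Real.sin x) (intervalIntegrable_const)
        ((continuous_const.mul Real.continuous_sin).intervalIntegrable _ _),
        intervalIntegral.integral_const, intervalIntegral.integral_const_mul, integral_sin]
      simp [Real.cos_pi_div_two, smul_eq_mul]
    simp only [Pi.mul_apply, Pi.add_apply] at this
    linarith

/-- The function
`α ↦ (1/√α) ∫₀^{π/2} √(1 + 4α sin²x) dx` tends to `2` as `α → ∞`.
Consequently, the ground-state energy per oscillator of the strongly coupled
nearest-neighbor harmonic chain, `E/(n E₀) = (2/π) ∫₀^{π/2} √(1 + 4α sin²x) dx`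
(in the large-`n` continuum limit), is asymptotic to `(4/π)√α` as `α → ∞`. -/
theorem energy_per_oscillator_strong_coupling_asymptotics :
    Tendsto (fun α : ℝ => (Real.sqrt α)⁻¹ *
        ∫ x in (0 : ℝ)..(π / 2), Real.sqrt (1 + 4 * α * (Real.sin x) ^ 2))
      atTop (nhds 2)
    ∧ Tendsto (fun α : ℝ =>
        ((2 / π) * ∫ x in (0 : ℝ)..(π / 2), Real.sqrt (1 + 4 * α * (Real.sin x) ^ 2))
          / ((4 / π) * Real.sqrt α))
      atTop (nhds 1) := by
  have hπ : (0:ℝ) < π := Real.pi_pos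
  have hsq : Tendsto Real.sqrt atTop atTop := by
    apply tendsto_atTop_atTop.mpr
    intro b
    refine ⟨b ^ 2 ⊔ 1, fun a ha => ?_⟩
    have h1 : b ^ 2 ≤ a := le_trans le_sup_left ha
    calc b ≤ |b| := le_abs_self b
      _ = Real.sqrt (b ^ 2) := (Real.sqrt_sq_eq_abs b).symm
      _ ≤ Real.sqrt a := Real.sqrt_le_sqrt h1
  have hinv : Tendsto (fun α : ℝ => (Real.sqrt α)⁻¹) atTop (nhds 0) :=
    hsq.inv_tendsto_atTop
  have hupper : Tendsto (fun α : ℝ => 2 + (π/2) * (Real.sqrt α)⁻¹) atTop (nhds 2) := by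
    simpa using tendsto_const_nhds.add (tendsto_const_nhds.mul hinv)
  have h1 : Tendsto (fun α : ℝ => (Real.sqrt α)⁻¹ *
      ∫ x in (0 : ℝ)..(π / 2), Real.sqrt (1 + 4 * α * (Real.sin x) ^ 2)) atTop (nhds 2) := by
    apply tendsto_of_tendsto_of_tendsto_of_le_of_le' tendsto_const_nhds hupper
    · filter_upwards [eventually_gt_atTop (0:ℝ)] with α hα
      exact (key_bounds α hα).1
    · filter_upwards [eventually_gt_atTop (0:ℝ)] with α hα
      exact (key_bounds α hα).2
  refine ⟨h1, ?_⟩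
  have heq : ∀ᶠ α : ℝ in atTop,
      ((2 / π) * ∫ x in (0 : ℝ)..(π / 2), Real.sqrt (1 + 4 * α * (Real.sin x) ^ 2))
          / ((4 / π) * Real.sqrt α)
      = ((Real.sqrt α)⁻¹ *
          ∫ x in (0 : ℝ)..(π / 2), Real.sqrt (1 + 4 * α * (Real.sin x) ^ 2)) / 2 := by
    filter_upwards [eventually_gt_atTop (0:ℝ)] with α hα
    have hs : Real.sqrt α ≠ 0 := ne_of_gt (Real.sqrt_pos.mpr hα)
    field_simp
    ring
  have := (h1.div_const 2)
  rw [show (2:ℝ)/2 = 1 by norm_num] at this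
  exact Tendsto.congr' (EventuallyEq.symm heq) this
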